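/- Let S = ℝ, ν = Unif[0,1], μ = δ₀ (Dirac mass at 0), and for b > 0 let bΓ₀ be the set of bounded b-Lipschitz functions. Then G_{bΓ₀}(μ‖ν) = log( b / (1 − e^{−b}) ). In particular G_{bΓ₀}(μ‖ν) = log b + o(log b) as b → ∞, while the scaled transport cost W_{b|·|}(μ,ν) = b/2. -/

import Mathlib

open MeasureTheory Real Filter

/-- The `Γ`-divergence for a set `Γ` of real functions on `ℝ`. -/
noncomputable def gDivF (Γ : Set (ℝ → ℝ)) (μ ν : Measure ℝ) : EReal :=
  ⨆ g ∈ Γ, (((∫ x, g x ∂μ) - Real.log (∫ x, Real.exp (g x) ∂ν) : ℝ) : EReal)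

/-- `W_Γ(μ − ν) = sup_{g ∈ Γ} ∫ g d(μ−ν)`. -/
noncomputable def wGammaF (Γ : Set (ℝ → ℝ)) (μ ν : Measure ℝ) : EReal :=
  ⨆ g ∈ Γ, (((∫ x, g x ∂μ) - ∫ x, g x ∂ν : ℝ) : EReal)

/-- Bounded `L`-Lipschitz functions on `ℝ`. -/
def lipSet (L : NNReal) : Set (ℝ → ℝ) :=
  {g : ℝ → ℝ | LipschitzWith L g ∧ ∃ C : ℝ, ∀ x, |g x| ≤ C}

/-- The uniform distribution on `[0, r]`. -/
noncomputable def unifMeas (r : ℝ) : Measure ℝ :=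
  (ENNReal.ofReal r)⁻¹ • volume.restrict (Set.Icc 0 r)

/-- For `ν = Unif[0,1]`, `μ = δ₀`, and `bΓ₀` the bounded `b`-Lipschitz functions:
`G_{bΓ₀}(μ‖ν) = log(b/(1 − e^{−b}))`, hence `G_{bΓ₀}(μ‖ν) = log b + o(log b)` as `b → ∞`,
while `W_{b|·|}(μ,ν) = b/2`. -/


lemma clamp_lip : LipschitzWith 1 (fun x : ℝ => max 0 (min x 1)) :=
  (LipschitzWith.id.min_const 1).const_max 0

lemma gstar_lip (b : ℝ) (hb : 0 ≤ b) :
    LipschitzWith b.toNNReal (fun x : ℝ => -(b * max 0 (min x 1))) := by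
  rw [lipschitzWith_iff_dist_le_mul]
  intro x y
  have h := clamp_lip.dist_le_mul x y
  rw [Real.dist_eq] at h ⊢
  rw [Real.dist_eq] at h ⊢
  have he : -(b * max 0 (min x 1)) - -(b * max 0 (min y 1))
      = -(b * (max 0 (min x 1) - max 0 (min y 1))) := by ring
  rw [he, abs_neg, abs_mul, abs_of_nonneg hb, Real.coe_toNNReal b hb]
  have h2 : |max 0 (min x 1) - max 0 (min y 1)| ≤ |x - y| := by simpa using h
  exact mul_le_mul_of_nonneg_left h2 hb

lemma gstar_mem (b : ℝ) (hb : 0 ≤ b) :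
    (fun x : ℝ => -(b * max 0 (min x 1))) ∈ lipSet b.toNNReal := by
  refine ⟨gstar_lip b hb, b, fun x => ?_⟩
  rw [abs_neg, abs_mul, abs_of_nonneg hb]
  have h1 : |max 0 (min x 1)| ≤ 1 := by
    rw [abs_of_nonneg (le_max_left _ _)]
    exact max_le zero_le_one (min_le_right _ _)
  nlinarith

lemma unif_one : unifMeas 1 = volume.restrict (Set.Icc (0:ℝ) 1) := by
  simp [unifMeas]

lemma int_exp (b : ℝ) (hb : 0 < b) :
    ∫ x in Set.Icc (0:ℝ) 1, Real.exp (-(b * x)) = (1 - Real.exp (-b)) / b := by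
  rw [MeasureTheory.integral_Icc_eq_integral_Ioc,
    ← intervalIntegral.integral_of_le zero_le_one]
  simp_rw [← neg_mul]
  rw [intervalIntegral.integral_comp_mul_left (fun x => Real.exp x)
    (neg_ne_zero.mpr hb.ne')]
  rw [eq_div_iff hb.ne']
  simp [integral_exp]
  have hb' : b ≠ 0 := hb.ne'
  field_simp
  ring

lemma int_lin (b c : ℝ) : ∫ x in Set.Icc (0:ℝ) 1, (c - b * x) = c - b / 2 := by
  rw [MeasureTheory.integral_Icc_eq_integral_Ioc,
    ← intervalIntegral.integral_of_le zero_le_one]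
  have h1 : IntervalIntegrable (fun _ : ℝ => c) volume 0 1 := intervalIntegrable_const
  have h2 : IntervalIntegrable (fun x : ℝ => b * x) volume 0 1 :=
    (continuous_const.mul continuous_id).intervalIntegrable 0 1
  rw [intervalIntegral.integral_sub h1 h2, intervalIntegral.integral_const,
    intervalIntegral.integral_const_mul, integral_id]
  norm_num
  ring

lemma key_lb (b : ℝ) (hb : 0 < b) {g : ℝ → ℝ} (hlip : LipschitzWith b.toNNReal g) :
    ∀ x ∈ Set.Icc (0:ℝ) 1, g 0 - b * x ≤ g x := by
  intro x hx
  have h := hlip.dist_le_mul x 0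
  rw [Real.dist_eq, Real.dist_eq, Real.coe_toNNReal b hb.le, sub_zero,
    abs_of_nonneg hx.1] at h
  linarith [(abs_le.mp h).1]

lemma part1 (b : ℝ) (hb : 0 < b) :
    gDivF (lipSet (Real.toNNReal b)) (Measure.dirac 0) (unifMeas 1)
      = ((Real.log (b / (1 - Real.exp (-b))) : ℝ) : EReal) := by
  have hpos : 0 < 1 - Real.exp (-b) := by
    have : Real.exp (-b) < 1 := Real.exp_lt_one_iff.mpr (by linarith)
    linarith
  have hloginv : Real.log ((1 - Real.exp (-b)) / b)
      = - Real.log (b / (1 - Real.exp (-b))) := by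
    rw [← Real.log_inv, inv_div]
  apply le_antisymm
  · rw [gDivF]
    apply iSup₂_le
    intro g hg
    rw [EReal.coe_le_coe_iff]
    obtain ⟨hlip, C, hC⟩ := hg
    rw [integral_dirac, unif_one]
    have key := key_lb b hb hlip
    have hint1 : IntegrableOn (fun x => Real.exp (g 0 - b * x)) (Set.Icc 0 1) volume :=
      (Real.continuous_exp.comp
        (continuous_const.sub (continuous_const.mul continuous_id))).integrableOn_Icc
    have hint2 : IntegrableOn (fun x => Real.exp (g x)) (Set.Icc 0 1) volume :=
      (Real.continuous_exp.comp hlip.continuous).integrableOn_Icc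
    have hmono : ∫ x in Set.Icc (0:ℝ) 1, Real.exp (g 0 - b * x)
        ≤ ∫ x in Set.Icc (0:ℝ) 1, Real.exp (g x) :=
      setIntegral_mono_on hint1 hint2 measurableSet_Icc
        (fun x hx => Real.exp_le_exp.mpr (key x hx))
    have hval : ∫ x in Set.Icc (0:ℝ) 1, Real.exp (g 0 - b * x)
        = Real.exp (g 0) * ((1 - Real.exp (-b)) / b) := by
      simp_rw [sub_eq_add_neg, Real.exp_add]
      rw [MeasureTheory.integral_const_mul, int_exp b hb]
      ring
    have hvpos : 0 < Real.exp (g 0) * ((1 - Real.exp (-b)) / b) := by positivity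
    have hlog : Real.log (Real.exp (g 0) * ((1 - Real.exp (-b)) / b))
        ≤ Real.log (∫ x in Set.Icc (0:ℝ) 1, Real.exp (g x)) := by
      apply Real.log_le_log (by rw [← hval] at hvpos ⊢; exact hvpos)
      rw [← hval]; exact hmono
    rw [Real.log_mul (Real.exp_pos _).ne' (by positivity), Real.log_exp, hloginv] at hlog
    linarith
  · rw [gDivF]
    apply le_iSup₂_of_le (fun x : ℝ => -(b * max 0 (min x 1))) (gstar_mem b hb.le)
    apply le_of_eq
    rw [EReal.coe_eq_coe_iff]
    rw [integral_dirac, unif_one]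
    have h0 : -(b * max (0:ℝ) (min (0:ℝ) 1)) = 0 := by norm_num
    have hI : ∫ x in Set.Icc (0:ℝ) 1, Real.exp (-(b * max 0 (min x 1)))
        = (1 - Real.exp (-b)) / b := by
      rw [← int_exp b hb]
      apply setIntegral_congr_fun measurableSet_Icc
      intro x hx
      simp only [min_eq_left hx.2, max_eq_right hx.1]
    simp only
    rw [h0, hI, hloginv]
    ring

lemma part3 (b : ℝ) (hb : 0 < b) :
    wGammaF (lipSet (Real.toNNReal b)) (Measure.dirac 0) (unifMeas 1)
      = ((b / 2 : ℝ) : EReal) := by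
  apply le_antisymm
  · rw [wGammaF]
    apply iSup₂_le
    intro g hg
    rw [EReal.coe_le_coe_iff]
    obtain ⟨hlip, C, hC⟩ := hg
    rw [integral_dirac, unif_one]
    have key := key_lb b hb hlip
    have hint1 : IntegrableOn (fun x => g 0 - b * x) (Set.Icc 0 1) volume :=
      (continuous_const.sub (continuous_const.mul continuous_id)).integrableOn_Icc
    have hint2 : IntegrableOn g (Set.Icc 0 1) volume := hlip.continuous.integrableOn_Icc
    have hmono : ∫ x in Set.Icc (0:ℝ) 1, (g 0 - b * x)
        ≤ ∫ x in Set.Icc (0:ℝ) 1, g x :=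
      setIntegral_mono_on hint1 hint2 measurableSet_Icc key
    rw [int_lin b (g 0)] at hmono
    linarith
  · rw [wGammaF]
    apply le_iSup₂_of_le (fun x : ℝ => -(b * max 0 (min x 1))) (gstar_mem b hb.le)
    apply le_of_eq
    rw [EReal.coe_eq_coe_iff]
    rw [integral_dirac, unif_one]
    have h0 : -(b * max (0:ℝ) (min (0:ℝ) 1)) = 0 := by norm_num
    have hI : ∫ x in Set.Icc (0:ℝ) 1, -(b * max 0 (min x 1)) = 0 - b / 2 := by
      rw [← int_lin b 0]
      apply setIntegral_congr_fun measurableSet_Icc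
      intro x hx
      simp only [min_eq_left hx.2, max_eq_right hx.1]
      ring
    simp only
    rw [h0, hI]
    ring

lemma part2 :
    Tendsto (fun b : ℝ =>
        (gDivF (lipSet (Real.toNNReal b)) (Measure.dirac 0) (unifMeas 1)).toReal / Real.log b)
      atTop (nhds 1) := by
  have hexp : Tendsto (fun b : ℝ => 1 - Real.exp (-b)) atTop (nhds 1) := by
    have := Real.tendsto_exp_neg_atTop_nhds_zero
    simpa using tendsto_const_nhds.sub this
  have hlog0 : Tendsto (fun b : ℝ => Real.log (1 - Real.exp (-b))) atTop (nhds 0) := by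
    have := (Real.continuousAt_log one_ne_zero).tendsto.comp hexp
    simpa [Function.comp_def] using this
  have hdiv : Tendsto (fun b : ℝ => Real.log (1 - Real.exp (-b)) / Real.log b)
      atTop (nhds 0) := hlog0.div_atTop Real.tendsto_log_atTop
  have hmain : Tendsto (fun b : ℝ => 1 - Real.log (1 - Real.exp (-b)) / Real.log b)
      atTop (nhds 1) := by
    simpa using tendsto_const_nhds.sub hdiv
  apply hmain.congr'
  filter_upwards [eventually_gt_atTop 1] with b hb1
  have hb : 0 < b := by linarith
  have hpos : 0 < 1 - Real.exp (-b) := by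
    have : Real.exp (-b) < 1 := Real.exp_lt_one_iff.mpr (by linarith)
    linarith
  have hlogb : Real.log b ≠ 0 := (Real.log_pos hb1).ne'
  rw [part1 b hb, EReal.toReal_coe, Real.log_div hb.ne' hpos.ne']
  field_simp

theorem gDiv_dirac_unif :
    (∀ b : ℝ, 0 < b →
        gDivF (lipSet (Real.toNNReal b)) (Measure.dirac 0) (unifMeas 1)
          = ((Real.log (b / (1 - Real.exp (-b))) : ℝ) : EReal)) ∧
    Tendsto (fun b : ℝ =>
        (gDivF (lipSet (Real.toNNReal b)) (Measure.dirac 0) (unifMeas 1)).toReal / Real.log b)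
      atTop (nhds 1) ∧
    (∀ b : ℝ, 0 < b →
        wGammaF (lipSet (Real.toNNReal b)) (Measure.dirac 0) (unifMeas 1)
          = ((b / 2 : ℝ) : EReal)) := by
  exact ⟨part1, part2, part3⟩
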